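/- (Proposition: no conjugate points near the critical radius in the extremal case.) Let m > 0 and q = m, so r₊ = m and r_⊛ = 3m/2. There exists r_⋆ ∈ (m, 3m/2) such that for every r_* ∈ (r_⋆, 3m/2) the following holds. Set D_* = (1 − m/r_*)², β = 2(r_* − m)/r_*², ω_* = r_*/(r_* − m), and ζ = −2(r_* − 2m)/r_*³. Let T > 0 and let r : [0, T] → ℝ be twice differentiable with r(0) = r_*, r′(0) = 0, r″(t) = −(1/2)·D′(r(t)) + β·√(D(r(t)) + r′(t)²) and D(r(t)) + r′(t)² ≥ 0 for all t ∈ [0, T], r(t) > m for t ∈ [0, T) and r(T) = m. Let ω : [0, T] → ℝ be twice differentiable with ω″(t) = (β² + 2m/r(t)³ − 3m²/r(t)⁴)·ω(t) + ζ for all t ∈ [0, T], ω(0) = ω_* and ω′(0) = 0. Then ω(t) > 0 for all t ∈ [0, T]. -/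

import Mathlib

/-- The metric function `D(r) = 1 - 2m/r + q²/r²`; in the extremal case `q = m` it equals
`(1 - m/r)²`. -/
noncomputable def D (m q r : ℝ) : ℝ := 1 - 2*m/r + q^2/r^2

/-- conserved quantity line: along a conformal curve, `√(D + r'²) = lin m rs (r t)`. -/
noncomputable def lin (m rs x : ℝ) : ℝ := (rs-m)*(2*x-rs)/rs^2

/-- comparison function (positive subsolution of the deviation equation). -/
def Qf (m x : ℝ) : ℝ := 400*m^3 - (27*m-20*x)^3
def Qf' (m x : ℝ) : ℝ := 60*(27*m-20*x)^2
def Qf'' (m x : ℝ) : ℝ := -2400*(27*m-20*x)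

lemma hasDerivAt_D (m x : ℝ) (hx : x ≠ 0) :
    HasDerivAt (D m m) (2*m/x^2 - 2*m^2/x^3) x := by
  have h : HasDerivAt (fun y : ℝ => 1 - 2*m*y⁻¹ + m^2*(y⁻¹*y⁻¹)) (2*m/x^2 - 2*m^2/x^3) x := by
    have hinv : HasDerivAt (fun y : ℝ => y⁻¹) (-(x^2)⁻¹) x := hasDerivAt_inv hx
    have h1 : HasDerivAt (fun y : ℝ => 2*m*y⁻¹) (2*m*(-(x^2)⁻¹)) x := hinv.const_mul _
    have h2 : HasDerivAt (fun y : ℝ => y⁻¹*y⁻¹) (-(x^2)⁻¹*x⁻¹ + x⁻¹*(-(x^2)⁻¹)) x :=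
      hinv.mul hinv
    have h3 : HasDerivAt (fun y : ℝ => m^2*(y⁻¹*y⁻¹)) (m^2*(-(x^2)⁻¹*x⁻¹ + x⁻¹*(-(x^2)⁻¹))) x :=
      h2.const_mul _
    have := ((hasDerivAt_const x (1:ℝ)).sub h1).add h3
    refine this.congr_deriv ?_
    field_simp
    ring
  have heq : D m m = fun y : ℝ => 1 - 2*m*y⁻¹ + m^2*(y⁻¹*y⁻¹) := by
    funext y
    simp only [D, div_eq_mul_inv]
    ring_nf
  rw [heq]
  exact h

lemma deriv_D (m x : ℝ) (hx : x ≠ 0) : deriv (D m m) x = 2*m/x^2 - 2*m^2/x^3 :=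
  (hasDerivAt_D m x hx).deriv

lemma hasDerivAt_Qf (m x : ℝ) : HasDerivAt (Qf m) (Qf' m x) x := by
  have h : HasDerivAt (fun y : ℝ => 400*m^3 - (27*m-20*y)^3) (Qf' m x) x := by
    have h1 : HasDerivAt (fun y : ℝ => 27*m-20*y) (-20 : ℝ) x := by
      simpa using ((hasDerivAt_id x).const_mul (20:ℝ)).const_sub (27*m)
    have h2 := (h1.pow 3)
    have := (hasDerivAt_const x (400*m^3)).sub h2
    refine this.congr_deriv ?_
    simp [Qf']
    ring
  exact h

lemma hasDerivAt_Qf' (m x : ℝ) : HasDerivAt (Qf' m) (Qf'' m x) x := by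
  have h1 : HasDerivAt (fun y : ℝ => 27*m-20*y) (-20 : ℝ) x := by
    simpa using ((hasDerivAt_id x).const_mul (20:ℝ)).const_sub (27*m)
  have h2 := (h1.pow 2).const_mul (60:ℝ)
  refine h2.congr_deriv ?_
  simp [Qf'']
  ring

lemma Qf_pos (m x : ℝ) (hm : 0 < m) (h1 : m ≤ x) : 0 < Qf m x := by
  have hcube : (27*m-20*x)^3 ≤ (7*m)^3 := by
    nlinarith [sq_nonneg (27*m-20*x + 7*m), sq_nonneg (27*m-20*x - 7*m), sq_nonneg (27*m-20*x), sq_nonneg m]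
  have : (7*m)^3 < 400*m^3 := by nlinarith [pow_pos hm 3]
  simp only [Qf]
  linarith

lemma W_neg (m rs x : ℝ) (hm : 0 < m) (hrs : m < rs) (h4 : rs < 3*m/2)
    (hx1 : rs < x) (hx2 : 2*(rs-m)*x < m*rs) :
    (lin m rs x)^2 - D m m x < 0 := by
  have hrs0 : (0:ℝ) < rs := lt_trans hm hrs
  have hx0 : (0:ℝ) < x := lt_trans hrs0 hx1
  have hA : (rs-m)*(2*x-rs)*x - (x-m)*rs^2 < 0 := by nlinarith [mul_pos (sub_pos.2 hx1) hrs0]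
  have hB : 0 < (rs-m)*(2*x-rs)*x + (x-m)*rs^2 := by
    have : 0 < (rs-m)*(2*x-rs)*x := by
      apply mul_pos (mul_pos (by linarith) (by linarith)) hx0
    nlinarith [sq_nonneg rs]
  have hnum : (rs-m)^2*(2*x-rs)^2*x^2 - (x-m)^2*rs^4 < 0 := by nlinarith [mul_neg_of_neg_of_pos hA hB]
  have hD : D m m x = (x-m)^2/x^2 := by
    simp only [D]; field_simp; ring
  simp only [lin, hD]
  rw [div_pow, div_sub_div _ _ (by positivity : ((rs:ℝ)^2)^2 ≠ 0) (by positivity : (x:ℝ)^2 ≠ 0), div_neg_iff]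
  right
  refine ⟨by nlinarith, by positivity⟩

set_option maxRecDepth 8000 in
set_option maxHeartbeats 1000000 in
lemma key_poly (m rs x : ℝ) (hm : 0 < m) (h1 : m ≤ x) (h2 : x ≤ rs)
    (h3 : 37*m ≤ 25*rs) (h4 : 2*rs ≤ 3*m) :
  (-2400*(27*m-20*x)) * ((rs-m)^2*(2*x-rs)^2*x^4 - (x-m)^2*x^2*rs^4)
  + (60*(27*m-20*x)^2) * (2*(rs-m)^2*(2*x-rs)*x^4 - (m*x - m^2)*x*rs^4)
  ≤ (4*(rs-m)^2*x^4 + (2*m*x - 3*m^2)*rs^4) * (400*m^3 - (27*m-20*x)^3) := by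
  have hg1 : (0:ℝ) ≤ x - m := by linarith
  have hg2 : (0:ℝ) ≤ rs - x := by linarith
  have hg3 : (0:ℝ) ≤ 25*rs - 37*m := by linarith
  have hg4 : (0:ℝ) ≤ 3*m - 2*rs := by linarith
  have hg5 : (0:ℝ) ≤ m := hm.le
  have ht0 : (0:ℝ) ≤ (x-m)^1*(25*rs-37*m)^7*m^1 := (mul_nonneg (mul_nonneg (pow_nonneg hg1 1) (pow_nonneg hg3 7)) (pow_nonneg hg5 1))
  have ht1 : (0:ℝ) ≤ (25*rs-37*m)^6*(3*m-2*rs)^1*m^2 := (mul_nonneg (mul_nonneg (pow_nonneg hg3 6) (pow_nonneg hg4 1)) (pow_nonneg hg5 2))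
  have ht2 : (0:ℝ) ≤ (x-m)^1*(rs-x)^4*(25*rs-37*m)^1*m^3 := (mul_nonneg (mul_nonneg (mul_nonneg (pow_nonneg hg1 1) (pow_nonneg hg2 4)) (pow_nonneg hg3 1)) (pow_nonneg hg5 3))
  have ht3 : (0:ℝ) ≤ (x-m)^3*(rs-x)^1*(25*rs-37*m)^2*m^3 := (mul_nonneg (mul_nonneg (mul_nonneg (pow_nonneg hg1 3) (pow_nonneg hg2 1)) (pow_nonneg hg3 2)) (pow_nonneg hg5 3))
  have ht4 : (0:ℝ) ≤ (x-m)^1*(rs-x)^1*(25*rs-37*m)^6*m^1 := (mul_nonneg (mul_nonneg (mul_nonneg (pow_nonneg hg1 1) (pow_nonneg hg2 1)) (pow_nonneg hg3 6)) (pow_nonneg hg5 1))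
  have ht5 : (0:ℝ) ≤ (25*rs-37*m)^2*(3*m-2*rs)^1*m^6 := (mul_nonneg (mul_nonneg (pow_nonneg hg3 2) (pow_nonneg hg4 1)) (pow_nonneg hg5 6))
  have ht6 : (0:ℝ) ≤ (x-m)^1*(rs-x)^2*(25*rs-37*m)^3*m^3 := (mul_nonneg (mul_nonneg (mul_nonneg (pow_nonneg hg1 1) (pow_nonneg hg2 2)) (pow_nonneg hg3 3)) (pow_nonneg hg5 3))
  have ht7 : (0:ℝ) ≤ (x-m)^7*(rs-x)^2 := (mul_nonneg (pow_nonneg hg1 7) (pow_nonneg hg2 2))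
  have ht8 : (0:ℝ) ≤ (25*rs-37*m)^1*(3*m-2*rs)^1*m^7 := (mul_nonneg (mul_nonneg (pow_nonneg hg3 1) (pow_nonneg hg4 1)) (pow_nonneg hg5 7))
  have ht9 : (0:ℝ) ≤ (x-m)^1*(rs-x)^4*m^4 := (mul_nonneg (mul_nonneg (pow_nonneg hg1 1) (pow_nonneg hg2 4)) (pow_nonneg hg5 4))
  have ht10 : (0:ℝ) ≤ (rs-x)^2*(3*m-2*rs)^1*m^6 := (mul_nonneg (mul_nonneg (pow_nonneg hg2 2) (pow_nonneg hg4 1)) (pow_nonneg hg5 6))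
  have ht11 : (0:ℝ) ≤ (x-m)^7*(rs-x)^1*(25*rs-37*m)^1 := (mul_nonneg (mul_nonneg (pow_nonneg hg1 7) (pow_nonneg hg2 1)) (pow_nonneg hg3 1))
  have ht12 : (0:ℝ) ≤ (x-m)^1*(rs-x)^2*(3*m-2*rs)^1*m^5 := (mul_nonneg (mul_nonneg (mul_nonneg (pow_nonneg hg1 1) (pow_nonneg hg2 2)) (pow_nonneg hg4 1)) (pow_nonneg hg5 5))
  have ht13 : (0:ℝ) ≤ (x-m)^3*(rs-x)^2*(25*rs-37*m)^2*m^2 := (mul_nonneg (mul_nonneg (mul_nonneg (pow_nonneg hg1 3) (pow_nonneg hg2 2)) (pow_nonneg hg3 2)) (pow_nonneg hg5 2))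
  have ht14 : (0:ℝ) ≤ (x-m)^5*(rs-x)^1*(25*rs-37*m)^3 := (mul_nonneg (mul_nonneg (pow_nonneg hg1 5) (pow_nonneg hg2 1)) (pow_nonneg hg3 3))
  have ht15 : (0:ℝ) ≤ (rs-x)^7*(25*rs-37*m)^1*m^1 := (mul_nonneg (mul_nonneg (pow_nonneg hg2 7) (pow_nonneg hg3 1)) (pow_nonneg hg5 1))
  have ht16 : (0:ℝ) ≤ (x-m)^2*(rs-x)^1*(25*rs-37*m)^6 := (mul_nonneg (mul_nonneg (pow_nonneg hg1 2) (pow_nonneg hg2 1)) (pow_nonneg hg3 6))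
  have ht17 : (0:ℝ) ≤ (x-m)^7*(25*rs-37*m)^2 := (mul_nonneg (pow_nonneg hg1 7) (pow_nonneg hg3 2))
  have ht18 : (0:ℝ) ≤ (x-m)^5*(25*rs-37*m)^4 := (mul_nonneg (pow_nonneg hg1 5) (pow_nonneg hg3 4))
  have ht19 : (0:ℝ) ≤ (25*rs-37*m)^4*(3*m-2*rs)^1*m^4 := (mul_nonneg (mul_nonneg (pow_nonneg hg3 4) (pow_nonneg hg4 1)) (pow_nonneg hg5 4))
  have ht20 : (0:ℝ) ≤ (x-m)^1*(rs-x)^1*(25*rs-37*m)^7 := (mul_nonneg (mul_nonneg (pow_nonneg hg1 1) (pow_nonneg hg2 1)) (pow_nonneg hg3 7))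
  have ht21 : (0:ℝ) ≤ (25*rs-37*m)^5*(3*m-2*rs)^1*m^3 := (mul_nonneg (mul_nonneg (pow_nonneg hg3 5) (pow_nonneg hg4 1)) (pow_nonneg hg5 3))
  have ht22 : (0:ℝ) ≤ (x-m)^2*(rs-x)^4*(25*rs-37*m)^1*m^2 := (mul_nonneg (mul_nonneg (mul_nonneg (pow_nonneg hg1 2) (pow_nonneg hg2 4)) (pow_nonneg hg3 1)) (pow_nonneg hg5 2))
  have ht23 : (0:ℝ) ≤ (rs-x)^1*(25*rs-37*m)^4*(3*m-2*rs)^1*m^3 := (mul_nonneg (mul_nonneg (mul_nonneg (pow_nonneg hg2 1) (pow_nonneg hg3 4)) (pow_nonneg hg4 1)) (pow_nonneg hg5 3))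
  have ht24 : (0:ℝ) ≤ (x-m)^1*(rs-x)^7*m^1 := (mul_nonneg (mul_nonneg (pow_nonneg hg1 1) (pow_nonneg hg2 7)) (pow_nonneg hg5 1))
  have ht25 : (0:ℝ) ≤ (rs-x)^1*(25*rs-37*m)^3*(3*m-2*rs)^1*m^4 := (mul_nonneg (mul_nonneg (mul_nonneg (pow_nonneg hg2 1) (pow_nonneg hg3 3)) (pow_nonneg hg4 1)) (pow_nonneg hg5 4))
  have ht26 : (0:ℝ) ≤ (x-m)^1*(rs-x)^2*(25*rs-37*m)^4*m^2 := (mul_nonneg (mul_nonneg (mul_nonneg (pow_nonneg hg1 1) (pow_nonneg hg2 2)) (pow_nonneg hg3 4)) (pow_nonneg hg5 2))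
  have ht27 : (0:ℝ) ≤ (x-m)^1*(rs-x)^1*(25*rs-37*m)^5*m^2 := (mul_nonneg (mul_nonneg (mul_nonneg (pow_nonneg hg1 1) (pow_nonneg hg2 1)) (pow_nonneg hg3 5)) (pow_nonneg hg5 2))
  have ht28 : (0:ℝ) ≤ (25*rs-37*m)^7*(3*m-2*rs)^1*m^1 := (mul_nonneg (mul_nonneg (pow_nonneg hg3 7) (pow_nonneg hg4 1)) (pow_nonneg hg5 1))
  have ht29 : (0:ℝ) ≤ (x-m)^1*(rs-x)^3*m^5 := (mul_nonneg (mul_nonneg (pow_nonneg hg1 1) (pow_nonneg hg2 3)) (pow_nonneg hg5 5))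
  have ht30 : (0:ℝ) ≤ (25*rs-37*m)^8*(3*m-2*rs)^1 := (mul_nonneg (pow_nonneg hg3 8) (pow_nonneg hg4 1))
  have ht31 : (0:ℝ) ≤ (rs-x)^2*(25*rs-37*m)^1*(3*m-2*rs)^1*m^5 := (mul_nonneg (mul_nonneg (mul_nonneg (pow_nonneg hg2 2) (pow_nonneg hg3 1)) (pow_nonneg hg4 1)) (pow_nonneg hg5 5))
  have ht32 : (0:ℝ) ≤ (x-m)^3*(rs-x)^1*(25*rs-37*m)^1*m^4 := (mul_nonneg (mul_nonneg (mul_nonneg (pow_nonneg hg1 3) (pow_nonneg hg2 1)) (pow_nonneg hg3 1)) (pow_nonneg hg5 4))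
  have ht33 : (0:ℝ) ≤ (rs-x)^2*(25*rs-37*m)^2*(3*m-2*rs)^1*m^4 := (mul_nonneg (mul_nonneg (mul_nonneg (pow_nonneg hg2 2) (pow_nonneg hg3 2)) (pow_nonneg hg4 1)) (pow_nonneg hg5 4))
  have ht34 : (0:ℝ) ≤ (x-m)^2*(rs-x)^1*(25*rs-37*m)^5*m^1 := (mul_nonneg (mul_nonneg (mul_nonneg (pow_nonneg hg1 2) (pow_nonneg hg2 1)) (pow_nonneg hg3 5)) (pow_nonneg hg5 1))
  have ht35 : (0:ℝ) ≤ (x-m)^5*m^4 := (mul_nonneg (pow_nonneg hg1 5) (pow_nonneg hg5 4))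
  have ht36 : (0:ℝ) ≤ (x-m)^1*(rs-x)^1*(25*rs-37*m)^4*m^3 := (mul_nonneg (mul_nonneg (mul_nonneg (pow_nonneg hg1 1) (pow_nonneg hg2 1)) (pow_nonneg hg3 4)) (pow_nonneg hg5 3))
  have ht37 : (0:ℝ) ≤ (x-m)^2*(rs-x)^7 := (mul_nonneg (pow_nonneg hg1 2) (pow_nonneg hg2 7))
  have ht38 : (0:ℝ) ≤ (x-m)^5*(rs-x)^1*(25*rs-37*m)^1*m^2 := (mul_nonneg (mul_nonneg (mul_nonneg (pow_nonneg hg1 5) (pow_nonneg hg2 1)) (pow_nonneg hg3 1)) (pow_nonneg hg5 2))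
  have ht39 : (0:ℝ) ≤ (x-m)^1*(rs-x)^7*(25*rs-37*m)^1 := (mul_nonneg (mul_nonneg (pow_nonneg hg1 1) (pow_nonneg hg2 7)) (pow_nonneg hg3 1))
  have ht40 : (0:ℝ) ≤ (x-m)^1*(rs-x)^4*(25*rs-37*m)^3*m^1 := (mul_nonneg (mul_nonneg (mul_nonneg (pow_nonneg hg1 1) (pow_nonneg hg2 4)) (pow_nonneg hg3 3)) (pow_nonneg hg5 1))
  have ht41 : (0:ℝ) ≤ (rs-x)^5*(25*rs-37*m)^4 := (mul_nonneg (pow_nonneg hg2 5) (pow_nonneg hg3 4))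
  have ht42 : (0:ℝ) ≤ (x-m)^1*(25*rs-37*m)^8 := (mul_nonneg (pow_nonneg hg1 1) (pow_nonneg hg3 8))
  have ht43 : (0:ℝ) ≤ (rs-x)^5*(25*rs-37*m)^2*m^2 := (mul_nonneg (mul_nonneg (pow_nonneg hg2 5) (pow_nonneg hg3 2)) (pow_nonneg hg5 2))
  have ht44 : (0:ℝ) ≤ (x-m)^2*(25*rs-37*m)^1*(3*m-2*rs)^1*m^5 := (mul_nonneg (mul_nonneg (mul_nonneg (pow_nonneg hg1 2) (pow_nonneg hg3 1)) (pow_nonneg hg4 1)) (pow_nonneg hg5 5))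
  have ht45 : (0:ℝ) ≤ (x-m)^1*(rs-x)^6*(25*rs-37*m)^2 := (mul_nonneg (mul_nonneg (pow_nonneg hg1 1) (pow_nonneg hg2 6)) (pow_nonneg hg3 2))
  have ht46 : (0:ℝ) ≤ (x-m)^1*(rs-x)^3*(25*rs-37*m)^5 := (mul_nonneg (mul_nonneg (pow_nonneg hg1 1) (pow_nonneg hg2 3)) (pow_nonneg hg3 5))
  have ht47 : (0:ℝ) ≤ (x-m)^6*(rs-x)^1*m^2 := (mul_nonneg (mul_nonneg (pow_nonneg hg1 6) (pow_nonneg hg2 1)) (pow_nonneg hg5 2))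
  have ht48 : (0:ℝ) ≤ (x-m)^4*(3*m-2*rs)^1*m^4 := (mul_nonneg (mul_nonneg (pow_nonneg hg1 4) (pow_nonneg hg4 1)) (pow_nonneg hg5 4))
  have ht49 : (0:ℝ) ≤ (x-m)^2*(rs-x)^4*m^3 := (mul_nonneg (mul_nonneg (pow_nonneg hg1 2) (pow_nonneg hg2 4)) (pow_nonneg hg5 3))
  have ht50 : (0:ℝ) ≤ (x-m)^1*(rs-x)^1*(25*rs-37*m)^3*m^4 := (mul_nonneg (mul_nonneg (mul_nonneg (pow_nonneg hg1 1) (pow_nonneg hg2 1)) (pow_nonneg hg3 3)) (pow_nonneg hg5 4))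
  have ht51 : (0:ℝ) ≤ (x-m)^1*(25*rs-37*m)^6*m^2 := (mul_nonneg (mul_nonneg (pow_nonneg hg1 1) (pow_nonneg hg3 6)) (pow_nonneg hg5 2))
  have ht52 : (0:ℝ) ≤ (25*rs-37*m)^3*(3*m-2*rs)^1*m^5 := (mul_nonneg (mul_nonneg (pow_nonneg hg3 3) (pow_nonneg hg4 1)) (pow_nonneg hg5 5))
  have ht53 : (0:ℝ) ≤ (x-m)^4*(rs-x)^1*(25*rs-37*m)^3*m^1 := (mul_nonneg (mul_nonneg (mul_nonneg (pow_nonneg hg1 4) (pow_nonneg hg2 1)) (pow_nonneg hg3 3)) (pow_nonneg hg5 1))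
  have ht54 : (0:ℝ) ≤ (x-m)^6*m^3 := (mul_nonneg (pow_nonneg hg1 6) (pow_nonneg hg5 3))
  linarith [ht0, ht1, ht2, ht3, ht4, ht5, ht6, ht7, ht8, ht9, ht10, ht11, ht12, ht13, ht14, ht15, ht16, ht17, ht18, ht19, ht20, ht21, ht22, ht23, ht24, ht25, ht26, ht27, ht28, ht29, ht30, ht31, ht32, ht33, ht34, ht35, ht36, ht37, ht38, ht39, ht40, ht41, ht42, ht43, ht44, ht45, ht46, ht47, ht48, ht49, ht50, ht51, ht52, ht53, ht54]


lemma key_ineq (m rs x : ℝ) (hm : 0 < m) (h1 : m ≤ x) (h2 : x ≤ rs)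
    (h3 : 37*m/25 ≤ rs) (h4 : rs ≤ 3*m/2) :
    Qf'' m x * ((lin m rs x)^2 - D m m x)
      + Qf' m x * ((2*(rs-m)/rs^2) * lin m rs x - (m/x^2 - m^2/x^3))
      ≤ ((2*(rs-m)/rs^2)^2 + 2*m/x^3 - 3*m^2/x^4) * Qf m x := by
  have hx0 : 0 < x := lt_of_lt_of_le hm h1
  have hrs0 : 0 < rs := lt_of_lt_of_le hx0 h2
  have key := key_poly m rs x hm h1 h2 (by linarith) (by linarith)
  rw [← sub_nonneg]
  have heq : ((2*(rs-m)/rs^2)^2 + 2*m/x^3 - 3*m^2/x^4) * Qf m x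
      - (Qf'' m x * ((lin m rs x)^2 - D m m x)
        + Qf' m x * ((2*(rs-m)/rs^2) * lin m rs x - (m/x^2 - m^2/x^3)))
      = ((4*(rs-m)^2*x^4 + (2*m*x - 3*m^2)*rs^4) * (400*m^3 - (27*m-20*x)^3)
        - ((-2400*(27*m-20*x)) * ((rs-m)^2*(2*x-rs)^2*x^4 - (x-m)^2*x^2*rs^4)
          + (60*(27*m-20*x)^2) * (2*(rs-m)^2*(2*x-rs)*x^4 - (m*x - m^2)*x*rs^4)))
        / (x^4 * rs^4) := by
    simp only [Qf, Qf', Qf'', lin, D]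
    field_simp
    ring
  rw [heq]
  apply div_nonneg (by linarith) (by positivity)


/-- No conjugate points near the critical radius in the extremal case `q = m` (so
`r₊ = m`, `r_⊛ = 3m/2`): there exists `r_⋆ ∈ (m, 3m/2)` such that for every
`r_* ∈ (r_⋆, 3m/2)`, along a conformal curve starting at `r_*` and reaching the horizon
`r = m` at time `T`, the deviation scalar `ω` solving
`ω″ = (β² + 2m/r³ - 3m²/r⁴)ω + ζ` with `β = 2(r_* - m)/r_*²`, `ζ = -2(r_* - 2m)/r_*³`,
`ω(0) = r_*/(r_* - m)` and `ω′(0) = 0` remains positive on `[0, T]`. -/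
theorem no_conjugate_points_extremal_near_critical (m : ℝ) (hm : 0 < m) :
    ∃ rstar : ℝ, m < rstar ∧ rstar < 3*m/2 ∧
      ∀ rs : ℝ, rstar < rs → rs < 3*m/2 →
      ∀ (T : ℝ) (r ω : ℝ → ℝ), 0 < T →
        r 0 = rs → deriv r 0 = 0 →
        (∀ t ∈ Set.Icc (0:ℝ) T, DifferentiableAt ℝ r t) →
        (∀ t ∈ Set.Icc (0:ℝ) T, DifferentiableAt ℝ (deriv r) t) →
        (∀ t ∈ Set.Icc (0:ℝ) T, 0 ≤ D m m (r t) + (deriv r t)^2) →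
        (∀ t ∈ Set.Icc (0:ℝ) T, deriv (deriv r) t =
          -(1/2) * deriv (D m m) (r t)
            + (2*(rs - m)/rs^2) * Real.sqrt (D m m (r t) + (deriv r t)^2)) →
        (∀ t ∈ Set.Ico (0:ℝ) T, m < r t) →
        r T = m →
        (∀ t ∈ Set.Icc (0:ℝ) T, DifferentiableAt ℝ ω t) →
        (∀ t ∈ Set.Icc (0:ℝ) T, DifferentiableAt ℝ (deriv ω) t) →
        (∀ t ∈ Set.Icc (0:ℝ) T, deriv (deriv ω) t =
          ((2*(rs - m)/rs^2)^2 + 2*m/(r t)^3 - 3*m^2/(r t)^4) * ω t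
            + (-2*(rs - 2*m)/rs^3)) →
        ω 0 = rs/(rs - m) →
        deriv ω 0 = 0 →
        ∀ t ∈ Set.Icc (0:ℝ) T, 0 < ω t := by
  refine ⟨37*m/25, by linarith, by linarith, ?_⟩
  intro rs hrs1 hrs2 T r ω hT hr0 hr'0 hrdiff hr'diff hEnn hrODE hrgt hrT
    hωdiff hω'diff hωODE hω0 hω'0
  have hmrs : m < rs := by linarith
  have hrs0 : (0:ℝ) < rs := by linarith
  have hrsm : (0:ℝ) < rs - m := by linarith
  -- r is at least m and positive on [0,T]
  have hrge : ∀ t ∈ Set.Icc (0:ℝ) T, m ≤ r t := by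
    intro t ht
    rcases eq_or_lt_of_le ht.2 with h | h
    · rw [h, hrT]
    · exact (hrgt t ⟨ht.1, h⟩).le
  have hrpos : ∀ t ∈ Set.Icc (0:ℝ) T, 0 < r t := fun t ht => lt_of_lt_of_le hm (hrge t ht)
  -- continuity
  have hrc : ContinuousOn r (Set.Icc 0 T) := fun t ht => (hrdiff t ht).continuousAt.continuousWithinAt
  have hr'c : ContinuousOn (deriv r) (Set.Icc 0 T) :=
    fun t ht => (hr'diff t ht).continuousAt.continuousWithinAt
  have hωc : ContinuousOn ω (Set.Icc 0 T) := fun t ht => (hωdiff t ht).continuousAt.continuousWithinAt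
  have hω'c : ContinuousOn (deriv ω) (Set.Icc 0 T) :=
    fun t ht => (hω'diff t ht).continuousAt.continuousWithinAt
  have hDc : ContinuousOn (fun t => D m m (r t)) (Set.Icc 0 T) := by
    intro t ht
    exact ((hasDerivAt_D m (r t) (hrpos t ht).ne').continuousAt.comp
      (hrdiff t ht).continuousAt).continuousWithinAt
  have hEc : ContinuousOn (fun t => D m m (r t) + (deriv r t)^2) (Set.Icc 0 T) :=
    hDc.add (hr'c.pow 2)
  have hlinrc : ContinuousOn (fun t => lin m rs (r t)) (Set.Icc 0 T) := by
    apply ContinuousOn.div_const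
    exact (continuousOn_const.mul ((continuousOn_const.mul hrc).sub continuousOn_const))
  -- positivity of lin along the curve
  have hlinpos : ∀ t ∈ Set.Icc (0:ℝ) T, 0 < lin m rs (r t) := by
    intro t ht
    have := hrge t ht
    have h2 : 0 < 2*(r t) - rs := by linarith
    simp only [lin]
    positivity
  -- derivative of E
  have hEd : ∀ t ∈ Set.Icc (0:ℝ) T, HasDerivAt (fun s => D m m (r s) + (deriv r s)^2)
      ((2*m/(r t)^2 - 2*m^2/(r t)^3) * deriv r t + deriv r t * deriv (deriv r) t * 2) t := by
    intro t ht
    have h1 : HasDerivAt (fun s => D m m (r s)) ((2*m/(r t)^2 - 2*m^2/(r t)^3) * deriv r t) t :=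
      (hasDerivAt_D m (r t) (hrpos t ht).ne').comp t (hrdiff t ht).hasDerivAt
    have h2 : HasDerivAt (fun s => (deriv r s)^2)
        (deriv r t * deriv (deriv r) t * 2) t := by
      have := ((hr'diff t ht).hasDerivAt).mul ((hr'diff t ht).hasDerivAt)
      have h3 : HasDerivAt (fun s => deriv r s * deriv r s)
          (deriv (deriv r) t * deriv r t + deriv r t * deriv (deriv r) t) t := this
      have h4 : (fun s => deriv r s * deriv r s) = fun s => (deriv r s)^2 := by
        funext s; ring
      rw [h4] at h3
      convert h3 using 1; ring
    exact h1.add h2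
  -- local conservation
  have loc : ∀ t₁ t₂, 0 ≤ t₁ → t₁ ≤ t₂ → t₂ ≤ T →
      (∀ s ∈ Set.Icc t₁ t₂, 0 < D m m (r s) + (deriv r s)^2) →
      Real.sqrt (D m m (r t₁) + (deriv r t₁)^2) = lin m rs (r t₁) →
      ∀ s ∈ Set.Icc t₁ t₂, Real.sqrt (D m m (r s) + (deriv r s)^2) = lin m rs (r s) := by
    intro t₁ t₂ h01 h12 h2T hpos hinit
    have hsub : Set.Icc t₁ t₂ ⊆ Set.Icc 0 T := Set.Icc_subset_Icc h01 h2T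
    apply eq_of_has_deriv_right_eq (f' := fun s => (2*(rs-m)/rs^2) * deriv r s)
    · intro s hs
      have hsI : s ∈ Set.Icc 0 T := hsub (Set.Ico_subset_Icc_self hs)
      have hEs := hEd s hsI
      have hEpos : 0 < D m m (r s) + (deriv r s)^2 := hpos s (Set.Ico_subset_Icc_self hs)
      have hsqrt := hEs.sqrt hEpos.ne'
      have hval : ((2*m/(r s)^2 - 2*m^2/(r s)^3) * deriv r s + deriv r s * deriv (deriv r) s * 2)
          / (2 * Real.sqrt (D m m (r s) + (deriv r s)^2))
          = (2*(rs-m)/rs^2) * deriv r s := by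
        have hg : 0 < Real.sqrt (D m m (r s) + (deriv r s)^2) := Real.sqrt_pos.2 hEpos
        rw [hrODE s hsI, deriv_D m (r s) (hrpos s hsI).ne']
        field_simp
        ring
      rw [hval] at hsqrt
      exact hsqrt.hasDerivWithinAt
    · intro s hs
      have hsI : s ∈ Set.Icc 0 T := hsub (Set.Ico_subset_Icc_self hs)
      have h1 : HasDerivAt (fun u => lin m rs (r u)) ((2*(rs-m)/rs^2) * deriv r s) s := by
        have h2 : HasDerivAt (fun u => (rs-m)*(2*(r u)-rs)/rs^2)
            ((rs-m)*(2*deriv r s)/rs^2) s := by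
          have h3 : HasDerivAt (fun u => 2*(r u)-rs) (2*deriv r s) s := by
            simpa using ((hrdiff s hsI).hasDerivAt.const_mul (2:ℝ)).sub_const rs
          exact (h3.const_mul _).div_const _
        have h4 : (fun u => lin m rs (r u)) = fun u => (rs-m)*(2*(r u)-rs)/rs^2 := by
          funext u; simp only [lin]
        rw [h4]
        convert h2 using 1; ring
      exact h1.hasDerivWithinAt
    · exact (Real.continuous_sqrt.comp_continuousOn (hEc.mono hsub))
    · exact hlinrc.mono hsub
    · exact hinit
  -- base point
  have hbase : Real.sqrt (D m m (r 0) + (deriv r 0)^2) = lin m rs (r 0) := by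
    rw [hr0, hr'0]
    have hD : D m m rs + 0^2 = ((rs-m)/rs)^2 := by
      simp only [D]; field_simp; ring
    rw [hD, Real.sqrt_sq (by positivity)]
    simp only [lin]
    field_simp
    ring
  -- global conservation
  have HC : ∀ t ∈ Set.Icc (0:ℝ) T, Real.sqrt (D m m (r t) + (deriv r t)^2) = lin m rs (r t) := by
    by_contra hcon
    push_neg at hcon
    obtain ⟨t₁, ht₁, hne1⟩ := hcon
    set A : Set ℝ := {t | t ∈ Set.Icc (0:ℝ) T ∧
      Real.sqrt (D m m (r t) + (deriv r t)^2) ≠ lin m rs (r t)} with hAdef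
    have hAne : A.Nonempty := ⟨t₁, ht₁, hne1⟩
    have hAbdd : BddBelow A := ⟨0, fun a ha => ha.1.1⟩
    set t₀ := sInf A with ht₀def
    have ht₀0 : 0 ≤ t₀ := le_csInf hAne (fun a ha => ha.1.1)
    have ht₀T : t₀ ≤ T := le_trans (csInf_le hAbdd ⟨ht₁, hne1⟩) ht₁.2
    have ht₀Icc : t₀ ∈ Set.Icc (0:ℝ) T := ⟨ht₀0, ht₀T⟩
    have hbefore : ∀ s, 0 ≤ s → s < t₀ →
        Real.sqrt (D m m (r s) + (deriv r s)^2) = lin m rs (r s) := by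
      intro s hs0 hst
      by_contra hne2
      exact absurd (csInf_le hAbdd ⟨⟨hs0, le_trans hst.le ht₀T⟩, hne2⟩) (not_le.2 hst)
    by_cases ht₀A : Real.sqrt (D m m (r t₀) + (deriv r t₀)^2) = lin m rs (r t₀)
    · -- equality at t₀; extend to the right, contradiction with sInf
      have hEt₀ : 0 < D m m (r t₀) + (deriv r t₀)^2 := by
        rcases lt_or_eq_of_le (hEnn t₀ ht₀Icc) with h | h
        · exact h
        · exfalso
          have : Real.sqrt (D m m (r t₀) + (deriv r t₀)^2) = 0 := by rw [← h, Real.sqrt_zero]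
          rw [ht₀A] at this
          exact absurd this (hlinpos t₀ ht₀Icc).ne'
      have ht₀T' : t₀ < T := by
        rcases lt_or_eq_of_le ht₀T with h | h
        · exact h
        · exfalso
          have hsub2 : t₀ ≤ t₁ := csInf_le hAbdd ⟨ht₁, hne1⟩
          have : t₁ = t₀ := le_antisymm (h ▸ ht₁.2) hsub2
          rw [this] at hne1
          exact hne1 ht₀A
      -- continuity of E at t₀, positivity nearby
      have hcontE := hEc t₀ ht₀Icc
      have hev : ∀ᶠ s in nhdsWithin t₀ (Set.Icc 0 T),
          0 < D m m (r s) + (deriv r s)^2 :=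
        hcontE.eventually (eventually_gt_nhds hEt₀)
      rw [eventually_nhdsWithin_iff] at hev
      obtain ⟨δ, hδ, hball⟩ := Metric.eventually_nhds_iff.1 hev
      set t₂ := min T (t₀ + δ/2) with ht₂def
      have ht₀t₂ : t₀ ≤ t₂ := le_min ht₀T (by linarith)
      have ht₂T : t₂ ≤ T := min_le_left _ _
      have hposon : ∀ s ∈ Set.Icc t₀ t₂, 0 < D m m (r s) + (deriv r s)^2 := by
        intro s hs
        apply hball
        · rw [Real.dist_eq, abs_lt]
          constructor
          · linarith [hs.1]
          · have : s ≤ t₀ + δ/2 := le_trans hs.2 (min_le_right _ _)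
            linarith
        · exact ⟨le_trans ht₀0 hs.1, le_trans hs.2 ht₂T⟩
      have hext := loc t₀ t₂ ht₀0 ht₀t₂ ht₂T hposon ht₀A
      have ht₂A : ∀ a ∈ A, t₂ < a := by
        intro a ha
        rcases lt_or_ge t₂ a with h | h
        · exact h
        · exfalso
          have ha₀ : t₀ ≤ a := csInf_le hAbdd ha
          exact ha.2 (hext a ⟨ha₀, h⟩)
      have : t₂ ≤ t₀ := le_csInf hAne (fun a ha => (ht₂A a ha).le)
      have ht₀lt : t₀ < t₂ := lt_min ht₀T' (by linarith)
      linarith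
    · -- inequality at t₀: contradiction with points just before t₀
      have ht₀pos : 0 < t₀ := by
        rcases lt_or_eq_of_le ht₀0 with h | h
        · exact h
        · exfalso; rw [← h] at ht₀A; exact ht₀A hbase
      have hcont : ContinuousWithinAt
          (fun s => Real.sqrt (D m m (r s) + (deriv r s)^2) - lin m rs (r s))
          (Set.Icc 0 T) t₀ :=
        ((Real.continuous_sqrt.comp_continuousOn hEc).sub hlinrc) t₀ ht₀Icc
      have hne3 : Real.sqrt (D m m (r t₀) + (deriv r t₀)^2) - lin m rs (r t₀) ≠ 0 :=
        sub_ne_zero.2 ht₀A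
      have hev := hcont.eventually_ne hne3
      rw [eventually_nhdsWithin_iff] at hev
      obtain ⟨δ, hδ, hball⟩ := Metric.eventually_nhds_iff.1 hev
      set s := max (t₀ - δ/2) (t₀/2) with hsdef
      have hs0 : 0 < s := lt_of_lt_of_le (by linarith) (le_max_right _ _)
      have hst₀ : s < t₀ := max_lt (by linarith) (by linarith)
      have hsIcc : s ∈ Set.Icc (0:ℝ) T := ⟨hs0.le, le_trans hst₀.le ht₀T⟩
      have hsball : dist s t₀ < δ := by
        rw [Real.dist_eq, abs_lt]
        constructor
        · have : t₀ - δ/2 ≤ s := le_max_left _ _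
          linarith
        · linarith
      have := hball hsball hsIcc
      exact this (sub_eq_zero.2 (hbefore s hs0.le hst₀)) |>.elim
  -- squared conservation
  have hE_eq : ∀ t ∈ Set.Icc (0:ℝ) T,
      D m m (r t) + (deriv r t)^2 = (lin m rs (r t))^2 := by
    intro t ht
    rw [← HC t ht, Real.sq_sqrt (hEnn t ht)]
  -- upper bound r t ≤ rs
  have hrle : ∀ t ∈ Set.Icc (0:ℝ) T, r t ≤ rs := by
    by_contra hcon
    push_neg at hcon
    obtain ⟨t₁, ht₁, hgt⟩ := hcon
    have hWnn : ∀ t ∈ Set.Icc (0:ℝ) T, 0 ≤ (lin m rs (r t))^2 - D m m (r t) := by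
      intro t ht
      have h1 := hE_eq t ht
      nlinarith [sq_nonneg (deriv r t)]
    have hr₂ : rs < m*rs/(2*(rs-m)) := by
      rw [lt_div_iff₀ (by linarith)]
      nlinarith
    rcases lt_or_ge (r t₁) (m*rs/(2*(rs-m))) with hc1 | hc2
    · have hx2 : 2*(rs-m)*(r t₁) < m*rs := by
        rw [lt_div_iff₀ (by linarith)] at hc1
        linarith [hc1]
      exact absurd (hWnn t₁ ht₁) (not_le.2 (W_neg m rs (r t₁) hm hmrs hrs2 hgt hx2))
    · set y := (rs + m*rs/(2*(rs-m)))/2 with hydef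
      have hy1 : rs < y := by simp only [hydef]; linarith
      have hy2 : y < m*rs/(2*(rs-m)) := by simp only [hydef]; linarith
      have hsub : Set.Icc (0:ℝ) t₁ ⊆ Set.Icc (0:ℝ) T := Set.Icc_subset_Icc le_rfl ht₁.2
      have hivt := intermediate_value_Icc ht₁.1 (hrc.mono hsub)
      have hymem : y ∈ Set.Icc (r 0) (r t₁) := by
        rw [hr0]
        exact ⟨hy1.le, by linarith⟩
      obtain ⟨t₂, ht₂, hrt₂⟩ := hivt hymem
      have ht₂I : t₂ ∈ Set.Icc (0:ℝ) T := hsub ht₂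
      have hx2 : 2*(rs-m)*(r t₂) < m*rs := by
        rw [hrt₂]
        rw [lt_div_iff₀ (by linarith)] at hy2
        linarith [hy2]
      have := W_neg m rs (r t₂) hm hmrs hrs2 (by rw [hrt₂]; exact hy1) hx2
      exact absurd (hWnn t₂ ht₂I) (not_le.2 this)
  -- second derivative of r in closed form
  have hr''eq : ∀ t ∈ Set.Icc (0:ℝ) T, deriv (deriv r) t =
      (2*(rs-m)/rs^2) * lin m rs (r t) - (m/(r t)^2 - m^2/(r t)^3) := by
    intro t ht
    rw [hrODE t ht, deriv_D m (r t) (hrpos t ht).ne', HC t ht]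
    ring
  -- pointwise subsolution inequality for u = Qf ∘ r
  have hkey : ∀ t ∈ Set.Icc (0:ℝ) T,
      Qf'' m (r t) * deriv r t * deriv r t + Qf' m (r t) * deriv (deriv r) t
        ≤ ((2*(rs-m)/rs^2)^2 + 2*m/(r t)^3 - 3*m^2/(r t)^4) * Qf m (r t) := by
    intro t ht
    have h2 : deriv r t * deriv r t = (lin m rs (r t))^2 - D m m (r t) := by
      have h1 := hE_eq t ht
      nlinarith
    rw [hr''eq t ht, mul_assoc, h2]
    have := key_ineq m rs (r t) hm (hrge t ht) (hrle t ht) (by linarith) (by linarith)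
    linarith [this]
  -- derivative facts for u = Qf ∘ r
  have hu' : ∀ t ∈ Set.Icc (0:ℝ) T,
      HasDerivAt (fun s => Qf m (r s)) (Qf' m (r t) * deriv r t) t := by
    intro t ht
    exact (hasDerivAt_Qf m (r t)).comp t (hrdiff t ht).hasDerivAt
  have hv' : ∀ t ∈ Set.Icc (0:ℝ) T,
      HasDerivAt (fun s => Qf' m (r s) * deriv r s)
        (Qf'' m (r t) * deriv r t * deriv r t + Qf' m (r t) * deriv (deriv r) t) t := by
    intro t ht
    have h1 : HasDerivAt (fun s => Qf' m (r s)) (Qf'' m (r t) * deriv r t) t :=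
      (hasDerivAt_Qf' m (r t)).comp t (hrdiff t ht).hasDerivAt
    exact h1.mul (hr'diff t ht).hasDerivAt
  have hupos : ∀ t ∈ Set.Icc (0:ℝ) T, 0 < Qf m (r t) :=
    fun t ht => Qf_pos m (r t) hm (hrge t ht)
  have huc : ContinuousOn (fun s => Qf m (r s)) (Set.Icc 0 T) :=
    fun t ht => (hu' t ht).continuousAt.continuousWithinAt
  have hu'c : ContinuousOn (fun s => Qf' m (r s) * deriv r s) (Set.Icc 0 T) :=
    fun t ht => (hv' t ht).continuousAt.continuousWithinAt
  have hζ : 0 < -2*(rs - 2*m)/rs^3 := by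
    apply div_pos (by linarith) (by positivity)
  -- the bootstrap
  by_contra hcon
  push_neg at hcon
  obtain ⟨t₁, ht₁, hω1⟩ := hcon
  set C : Set ℝ := {t | t ∈ Set.Icc (0:ℝ) T ∧ ω t ≤ 0} with hCdef
  have hCne : C.Nonempty := ⟨t₁, ht₁, hω1⟩
  have hCbdd : BddBelow C := ⟨0, fun a ha => ha.1.1⟩
  have hCclosed : IsClosed C := by
    have : C = Set.Icc (0:ℝ) T ∩ ω ⁻¹' (Set.Iic 0) := by
      ext a; simp [hCdef, Set.mem_Icc, and_comm]
    rw [this]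
    exact hωc.preimage_isClosed_of_isClosed isClosed_Icc isClosed_Iic
  set t₀ := sInf C with ht₀def
  have ht₀C : t₀ ∈ C := hCclosed.csInf_mem hCne hCbdd
  have ht₀Icc : t₀ ∈ Set.Icc (0:ℝ) T := ht₀C.1
  have hωt₀ : ω t₀ ≤ 0 := ht₀C.2
  have hω0pos : 0 < ω 0 := by rw [hω0]; positivity
  have ht₀pos : 0 < t₀ := by
    rcases lt_or_eq_of_le ht₀Icc.1 with h | h
    · exact h
    · exfalso; rw [← h] at hωt₀; linarith
  have hbefore : ∀ s, 0 ≤ s → s < t₀ → 0 < ω s := by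
    intro s hs0 hst
    by_contra hle
    push_neg at hle
    exact absurd (csInf_le hCbdd ⟨⟨hs0, le_trans hst.le ht₀Icc.2⟩, hle⟩) (not_le.2 hst)
  set Z : ℝ → ℝ := fun t => deriv ω t * Qf m (r t) - ω t * (Qf' m (r t) * deriv r t) with hZdef
  have hZ0 : Z 0 = 0 := by
    simp only [hZdef, hω'0, hr'0]
    ring
  have hZc : ContinuousOn Z (Set.Icc 0 T) := (hω'c.mul huc).sub (hωc.mul hu'c)
  have hZd : ∀ t ∈ Set.Ioo (0:ℝ) t₀, 0 < deriv Z t := by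
    intro t htI
    have ht : t ∈ Set.Icc (0:ℝ) T := ⟨htI.1.le, le_trans htI.2.le ht₀Icc.2⟩
    have h1 : HasDerivAt (fun s => deriv ω s * Qf m (r s))
        (deriv (deriv ω) t * Qf m (r t) + deriv ω t * (Qf' m (r t) * deriv r t)) t :=
      (hω'diff t ht).hasDerivAt.mul (hu' t ht)
    have h2 : HasDerivAt (fun s => ω s * (Qf' m (r s) * deriv r s))
        (deriv ω t * (Qf' m (r t) * deriv r t)
          + ω t * (Qf'' m (r t) * deriv r t * deriv r t + Qf' m (r t) * deriv (deriv r) t)) t :=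
      (hωdiff t ht).hasDerivAt.mul (hv' t ht)
    have h3 : HasDerivAt Z
        (deriv (deriv ω) t * Qf m (r t)
          - ω t * (Qf'' m (r t) * deriv r t * deriv r t + Qf' m (r t) * deriv (deriv r) t)) t := by
      have := h1.sub h2
      refine this.congr_deriv ?_
      ring
    rw [h3.deriv, hωODE t ht]
    have hωnn : 0 < ω t := hbefore t htI.1.le htI.2
    have hkk := hkey t ht
    have hQp := hupos t ht
    linarith [mul_le_mul_of_nonneg_left hkk hωnn.le, mul_pos hζ hQp]
  have hZmono : StrictMonoOn Z (Set.Icc 0 t₀) := by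
    apply strictMonoOn_of_deriv_pos (convex_Icc 0 t₀)
      (hZc.mono (Set.Icc_subset_Icc le_rfl ht₀Icc.2))
    intro x hx
    rw [interior_Icc] at hx
    exact hZd x hx
  have hZpos : ∀ s ∈ Set.Ioo (0:ℝ) t₀, 0 < Z s := by
    intro s hs
    have := hZmono ⟨le_rfl, ht₀pos.le⟩ ⟨hs.1.le, hs.2.le⟩ hs.1
    rw [hZ0] at this
    exact this
  -- y = ω / u strictly increasing
  set y : ℝ → ℝ := fun t => ω t / Qf m (r t) with hydef2
  have hyc : ContinuousOn y (Set.Icc 0 t₀) := by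
    apply ContinuousOn.div (hωc.mono (Set.Icc_subset_Icc le_rfl ht₀Icc.2))
      (huc.mono (Set.Icc_subset_Icc le_rfl ht₀Icc.2))
    intro x hx
    exact (hupos x (Set.Icc_subset_Icc le_rfl ht₀Icc.2 hx)).ne'
  have hymono : StrictMonoOn y (Set.Icc 0 t₀) := by
    apply strictMonoOn_of_deriv_pos (convex_Icc 0 t₀) hyc
    intro x hx
    rw [interior_Icc] at hx
    have hxI : x ∈ Set.Icc (0:ℝ) T := ⟨hx.1.le, le_trans hx.2.le ht₀Icc.2⟩
    have hyd : HasDerivAt y (Z x / (Qf m (r x))^2) x :=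
      (hωdiff x hxI).hasDerivAt.div (hu' x hxI) (hupos x hxI).ne'
    rw [hyd.deriv]
    exact div_pos (hZpos x hx) (pow_pos (hupos x hxI) 2)
  have hfin := hymono (Set.left_mem_Icc.2 ht₀pos.le) (Set.right_mem_Icc.2 ht₀pos.le) ht₀pos
  have hy0 : 0 < y 0 := div_pos hω0pos (hupos 0 ⟨le_rfl, hT.le⟩)
  have hyt₀ : 0 < y t₀ := lt_trans hy0 hfin
  have : 0 < ω t₀ := by
    have := mul_pos hyt₀ (hupos t₀ ht₀Icc)
    simp only [hydef2] at this
    rw [div_mul_cancel₀] at this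
    · exact this
    · exact (hupos t₀ ht₀Icc).ne'
  linarith
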